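/- Let φ be a flow on a compact metric space, x a chain recurrent point, and y a point such that every attractor containing x also contains y. Then there is a pseudo-orbit from x to y. -/

import Mathlib

variable {X : Type*}

/-- `φ` is a flow: a continuous group action of `ℝ` on `X`. -/
def IsFlow [TopologicalSpace X] (φ : X → ℝ → X) : Prop :=
  Continuous (fun p : X × ℝ => φ p.1 p.2) ∧ (∀ x, φ x 0 = x) ∧
    ∀ (x : X) (s t : ℝ), φ (φ x s) t = φ x (s + t)

/-- An `(ε, T)`-chain from `x` to `y`: a finite sequence of points starting at `x`
and ending at `y`, with jump times at least `T`, where each jump lands within `ε`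
of the next point. -/
def IsETChain [MetricSpace X] (φ : X → ℝ → X) (ε T : ℝ) (x y : X) : Prop :=
  ∃ (n : ℕ) (z : ℕ → X) (t : ℕ → ℝ), 1 ≤ n ∧ z 0 = x ∧ z n = y ∧
    ∀ i < n, T ≤ t i ∧ dist (φ (z i) (t i)) (z (i + 1)) < ε

/-- A pseudo-orbit from `x` to `y`: `(ε,T)`-chains exist for all `ε, T > 0`. -/
def Pseudo [MetricSpace X] (φ : X → ℝ → X) (x y : X) : Prop :=
  ∀ ε > (0 : ℝ), ∀ T > (0 : ℝ), IsETChain φ ε T x y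

/-- A point is chain recurrent if there is a pseudo-orbit from it to itself. -/
def ChainRec [MetricSpace X] (φ : X → ℝ → X) (x : X) : Prop := Pseudo φ x x

/-- A set is invariant under the flow `φ`. -/
def IsInvariant' (φ : X → ℝ → X) (A : Set X) : Prop :=
  ∀ x ∈ A, ∀ t : ℝ, φ x t ∈ A

/-- `A` is an attractor of `φ`: a compact nonempty invariant set having a
neighbourhood all of whose points converge uniformly to `A`. -/
def IsAttractor [MetricSpace X] (φ : X → ℝ → X) (A : Set X) : Prop :=
  IsCompact A ∧ A.Nonempty ∧ IsInvariant' φ A ∧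
    ∃ U : Set X, IsOpen U ∧ A ⊆ U ∧
      ∀ ε > (0 : ℝ), ∃ T : ℝ, ∀ t ≥ T, ∀ x ∈ U, Metric.infDist (φ x t) A < ε

/-- A repellor is an attractor of the time-reversed flow. -/
def IsRepellor [MetricSpace X] (φ : X → ℝ → X) (A : Set X) : Prop :=
  IsAttractor (fun x t => φ x (-t)) A

/-- `B` is a trapping region for `A`: an open forward-invariant set with
`φ(cl B, t) ⊆ B` for all `t ≥ T` for some `T > 0`, and `A = ⋂_{t ≥ 0} φ(B, t)`. -/
def IsTrappingFor [TopologicalSpace X] (φ : X → ℝ → X) (A B : Set X) : Prop :=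
  IsOpen B ∧ (∀ x ∈ B, ∀ t ≥ (0 : ℝ), φ x t ∈ B) ∧
    (∃ T > (0 : ℝ), ∀ t ≥ T, ∀ x ∈ closure B, φ x t ∈ B) ∧
    A = ⋂ t ∈ Set.Ici (0 : ℝ), (fun x => φ x t) '' B

/-- `A` is an attractor of `φ` (trapping-region definition). -/
def IsAttractorT [TopologicalSpace X] (φ : X → ℝ → X) (A : Set X) : Prop :=
  IsCompact A ∧ A.Nonempty ∧ IsInvariant' φ A ∧ ∃ B, IsTrappingFor φ A B

/-- The dual repellor of an attractor with trapping region `B`: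
`A* = ⋂_{t ≤ 0} φ(X \ B, t)`. -/
def dualRepellor (φ : X → ℝ → X) (B : Set X) : Set X :=
  ⋂ t ∈ Set.Ici (0 : ℝ), (fun x => φ x (-t)) '' Bᶜ

section ChainAux

lemma chain_extend [MetricSpace X] {φ : X → ℝ → X} {ε T : ℝ} {x u z : X}
    (h : IsETChain φ ε T x u) {t : ℝ} (ht : T ≤ t) (hz : dist (φ u t) z < ε) :
    IsETChain φ ε T x z := by
  obtain ⟨n, zs, ts, hn, h0, hnu, hstep⟩ := h
  refine ⟨n + 1, fun i => if i = n + 1 then z else zs i,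
      fun i => if i = n then t else ts i, hn.trans (Nat.le_succ n),
      by simp [h0], by simp, ?_⟩
  intro i hi
  by_cases hi' : i = n
  · subst hi'
    simpa [show i ≠ i + 1 by omega, hnu] using ⟨ht, hz⟩
  · have hin : i < n := by omega
    simpa [show i ≠ n from hi', show i ≠ n + 1 by omega,
      show i + 1 ≠ n + 1 by omega] using hstep i hin

lemma chain_open [MetricSpace X] {φ : X → ℝ → X} {ε T : ℝ} {x : X} :
    IsOpen {z : X | IsETChain φ ε T x z} := by
  rw [Metric.isOpen_iff]
  rintro z ⟨n, zs, ts, hn, h0, hnz, hstep⟩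
  obtain ⟨m, rfl⟩ : ∃ m, n = m + 1 := ⟨n - 1, (Nat.succ_pred_eq_of_pos hn).symm⟩
  have hc : dist (φ (zs m) (ts m)) z < ε := by
    have := (hstep m (by omega)).2; rwa [hnz] at this
  refine ⟨ε - dist (φ (zs m) (ts m)) z, by linarith, fun w hw => ?_⟩
  rw [Metric.mem_ball] at hw
  refine ⟨m + 1, fun i => if i = m + 1 then w else zs i, ts, hn,
      by simp [h0], by simp, ?_⟩
  intro i hi
  by_cases hi' : i = m
  · subst hi'
    refine ⟨(hstep i (by omega)).1, ?_⟩
    have hlt : dist (φ (zs i) (ts i)) w < ε :=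
      calc dist (φ (zs i) (ts i)) w
          ≤ dist (φ (zs i) (ts i)) z + dist z w := dist_triangle _ _ _
        _ < ε := by rw [dist_comm z w]; linarith
    simpa [show i ≠ i + 1 by omega] using hlt
  · have hin : i < m := by omega
    simpa [hi', show i ≠ m + 1 by omega, show i + 1 ≠ m + 1 by omega] using hstep i (by omega)

end ChainAux

/-- if `x` is chain recurrent and every attractor containing `x` also
contains `y`, then there is a pseudo-orbit from `x` to `y`. -/
theorem pseudo_orbit_of_attractors_subset [MetricSpace X] [CompactSpace X]
    (φ : X → ℝ → X) (hφ : IsFlow φ) (x y : X) (hx : ChainRec φ x)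
    (h : ∀ A : Set X, IsAttractorT φ A → x ∈ A → y ∈ A) :
    Pseudo φ x y := by
  obtain ⟨hcont, h0, hadd⟩ := hφ
  have hct : ∀ t : ℝ, Continuous fun z : X => φ z t := fun t =>
    hcont.comp (continuous_id.prodMk continuous_const)
  intro ε hε T hT
  -- P0 : chain-reachable points
  set P0 : Set X := {z : X | IsETChain φ ε T x z} with hP0def
  have hxP0 : x ∈ P0 := hx ε hε T hT
  have hext : ∀ u ∈ P0, ∀ t : ℝ, T ≤ t → ∀ z : X, dist (φ u t) z < ε → z ∈ P0 :=
    fun u hu t ht z hz => chain_extend hu ht hz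
  have hP0open : IsOpen P0 := chain_open
  -- P : forward saturation of P0
  set P : Set X := ⋃ s ∈ Set.Ici (0 : ℝ), (fun z => φ z s) '' P0 with hPdef
  have hmemP : ∀ w : X, w ∈ P ↔ ∃ s : ℝ, 0 ≤ s ∧ ∃ u ∈ P0, φ u s = w := by
    intro w
    constructor
    · intro hw
      simp only [hPdef, Set.mem_iUnion, Set.mem_image, Set.mem_Ici, exists_prop] at hw
      obtain ⟨s, hs, u, hu, huw⟩ := hw
      exact ⟨s, hs, u, hu, huw⟩
    · rintro ⟨s, hs, u, hu, rfl⟩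
      simp only [hPdef, Set.mem_iUnion, Set.mem_image, Set.mem_Ici, exists_prop]
      exact ⟨s, hs, u, hu, rfl⟩
  have hP0P : P0 ⊆ P := fun z hz => (hmemP z).2 ⟨0, le_refl 0, z, hz, h0 z⟩
  have hxP : x ∈ P := hP0P hxP0
  have hPopen : IsOpen P := by
    refine isOpen_biUnion fun s _ => ?_
    have himg : (fun z : X => φ z s) '' P0 = (fun z : X => φ z (-s)) ⁻¹' P0 := by
      ext w
      constructor
      · rintro ⟨u, hu, rfl⟩
        show φ (φ u s) (-s) ∈ P0
        rw [hadd, add_neg_cancel, h0]; exact hu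
      · intro hw
        refine ⟨φ w (-s), hw, ?_⟩
        show φ (φ w (-s)) s = w
        rw [hadd, neg_add_cancel, h0]
    rw [himg]
    exact hP0open.preimage (hct (-s))
  have hfwd : ∀ z ∈ P, ∀ t : ℝ, 0 ≤ t → φ z t ∈ P := by
    intro z hz t ht
    obtain ⟨s, hs, u, hu, rfl⟩ := (hmemP z).1 hz
    exact (hmemP _).2 ⟨s + t, by linarith, u, hu, (hadd u s t).symm⟩
  have hextP : ∀ u ∈ P, ∀ t : ℝ, T ≤ t → ∀ z : X, dist (φ u t) z < ε → z ∈ P0 := by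
    intro u hu t ht z hz
    obtain ⟨s, hs, v, hv, rfl⟩ := (hmemP u).1 hu
    rw [hadd] at hz
    exact hext v hv (s + t) (by linarith) z hz
  -- trapping property
  have htrap : ∀ t : ℝ, T ≤ t → ∀ z ∈ closure P, φ z t ∈ P0 := by
    intro t ht z hz
    have hc : ContinuousAt (fun w => φ w t) z := (hct t).continuousAt
    rw [Metric.continuousAt_iff] at hc
    obtain ⟨δ, hδ, hballs⟩ := hc ε hε
    obtain ⟨w, hwP, hwz⟩ := Metric.mem_closure_iff.1 hz δ hδ
    have : dist (φ w t) (φ z t) < ε := hballs (by rw [dist_comm] at hwz; exact hwz)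
    exact hextP w hwP t ht (φ z t) this
  -- closure of P is forward invariant
  have hclP : ∀ z ∈ closure P, ∀ t : ℝ, 0 ≤ t → φ z t ∈ closure P := by
    intro z hz t ht
    have : φ z t ∈ (fun w => φ w t) '' closure P := ⟨z, hz, rfl⟩
    have h1 : (fun w => φ w t) '' closure P ⊆ closure ((fun w => φ w t) '' P) :=
      image_closure_subset_closure_image (hct t)
    refine closure_mono ?_ (h1 this)
    rintro w ⟨u, hu, rfl⟩
    exact hfwd u hu t ht
  -- the compact sets K t
  set K : ℝ → Set X := fun t => (fun z => φ z t) '' closure P with hKdef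
  have hKcomp : ∀ t, IsCompact (K t) := fun t =>
    (isClosed_closure.isCompact).image (hct t)
  have hKne : ∀ t, (K t).Nonempty := fun t =>
    ⟨φ x t, x, subset_closure hxP, rfl⟩
  have hKmono : ∀ s t : ℝ, 0 ≤ s → s ≤ t → K t ⊆ K s := by
    rintro s t hs hst w ⟨u, hu, rfl⟩
    refine ⟨φ u (t - s), hclP u hu (t - s) (by linarith), ?_⟩
    show φ (φ u (t - s)) s = φ u t
    rw [hadd, sub_add_cancel]
  -- the attractor
  set A : Set X := ⋂ t ∈ Set.Ici (0 : ℝ), (fun z => φ z t) '' P with hAdef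
  have hAmem : ∀ z : X, z ∈ A ↔ ∀ t : ℝ, 0 ≤ t → ∃ u ∈ P, φ u t = z := by
    intro z
    constructor
    · intro hz t ht
      have := Set.mem_iInter₂.1 hz t (Set.mem_Ici.2 ht)
      obtain ⟨u, hu, huz⟩ := this
      exact ⟨u, hu, huz⟩
    · intro hz
      refine Set.mem_iInter₂.2 fun t ht => ?_
      obtain ⟨u, hu, huz⟩ := hz t (Set.mem_Ici.1 ht)
      exact ⟨u, hu, huz⟩
  have hAK : A = ⋂ t ∈ Set.Ici (0 : ℝ), K t := by
    apply le_antisymm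
    · refine Set.iInter₂_mono fun t _ => ?_
      exact Set.image_mono subset_closure
    · intro z hz
      simp only [Set.mem_iInter, Set.mem_Ici] at hz
      rw [hAmem]
      intro t ht
      obtain ⟨u, hu, huz⟩ := hz (t + T) (by linarith)
      refine ⟨φ u T, hP0P (htrap T le_rfl u hu), ?_⟩
      show φ (φ u T) t = z
      rw [hadd, ← huz]; ring_nf
  have hKsub : ∀ t : ℝ, 0 ≤ t → A ⊆ K t := by
    intro t ht
    rw [hAK]
    exact fun z hz => by simpa using (Set.mem_iInter₂.1 hz t ht)
  -- A is compact and closed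
  have hAclosed : IsClosed A := by
    rw [hAK]
    exact isClosed_biInter fun t _ => (hKcomp t).isClosed
  have hAcomp : IsCompact A := hAclosed.isCompact
  -- A nonempty via Cantor intersection
  have hAne : A.Nonempty := by
    rw [hAK]
    have : (⋂ t : Set.Ici (0 : ℝ), K t.1).Nonempty := by
      refine IsCompact.nonempty_iInter_of_directed_nonempty_isCompact_isClosed _
        ?_ (fun t => hKne t.1) (fun t => hKcomp t.1) (fun t => (hKcomp t.1).isClosed)
      rintro ⟨s, hs⟩ ⟨t, ht⟩
      refine ⟨⟨max s t, Set.mem_Ici.2 (le_trans (Set.mem_Ici.1 hs) (le_max_left _ _))⟩, ?_, ?_⟩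
      · exact hKmono s (max s t) hs (le_max_left _ _)
      · exact hKmono t (max s t) ht (le_max_right _ _)
    rw [Set.biInter_eq_iInter]
    exact this
  -- A invariant
  have hAinv : IsInvariant' φ A := by
    intro z hz t
    rw [hAmem] at hz ⊢
    intro s hs
    by_cases hst : 0 ≤ s - t
    · obtain ⟨u, hu, rfl⟩ := hz (s - t) hst
      exact ⟨u, hu, by rw [hadd, sub_add_cancel]⟩
    · have ht0 : 0 ≤ t := by linarith
      obtain ⟨u, hu, rfl⟩ := hz s hs
      refine ⟨φ u t, hfwd u hu t ht0, ?_⟩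
      rw [hadd, hadd, add_comm]
  -- A is an attractor with trapping region P
  have hAattr : IsAttractorT φ A := by
    refine ⟨hAcomp, hAne, hAinv, P, hPopen, hfwd, ⟨T, hT, fun t ht z hz =>
      hP0P (htrap t ht z hz)⟩, hAdef⟩
  -- x ∈ A
  have hxA : x ∈ A := by
    by_contra hxA
    have hd : 0 < Metric.infDist x A :=
      (hAclosed.notMem_iff_infDist_pos hAne).1 hxA
    set d := Metric.infDist x A with hddef
    -- U : open neighbourhood of A
    set U : Set X := {w : X | Metric.infDist w A < d / 2} with hUdef
    have hUopen : IsOpen U :=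
      isOpen_lt (Metric.continuous_infDist_pt A) continuous_const
    have hAU : A ⊆ U := by
      intro z hz
      show Metric.infDist z A < d / 2
      rw [Metric.infDist_zero_of_mem hz]; linarith
    -- some K t₀ is inside U
    have hexU : ∃ t₀ : ℝ, 0 ≤ t₀ ∧ K t₀ ⊆ U := by
      by_contra hcon
      push_neg at hcon
      have hKU : ∀ t : Set.Ici (0 : ℝ), (K t.1 ∩ Uᶜ).Nonempty := by
        rintro ⟨t, ht⟩
        obtain ⟨w, hw1, hw2⟩ := Set.not_subset.1 (hcon t ht)
        exact ⟨w, hw1, hw2⟩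
      have hne : (⋂ t : Set.Ici (0 : ℝ), (K t.1 ∩ Uᶜ)).Nonempty := by
        refine IsCompact.nonempty_iInter_of_directed_nonempty_isCompact_isClosed _
          ?_ hKU (fun t => ((hKcomp t.1).inter_right hUopen.isClosed_compl))
          (fun t => ((hKcomp t.1).isClosed.inter hUopen.isClosed_compl))
        rintro ⟨s, hs⟩ ⟨t, ht⟩
        refine ⟨⟨max s t, Set.mem_Ici.2 (le_trans (Set.mem_Ici.1 hs) (le_max_left _ _))⟩,
          Set.inter_subset_inter_left _ (hKmono s _ hs (le_max_left _ _)),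
          Set.inter_subset_inter_left _ (hKmono t _ ht (le_max_right _ _))⟩
      obtain ⟨w, hw⟩ := hne
      simp only [Set.mem_iInter, Set.mem_inter_iff] at hw
      have hwA : w ∈ A := by
        rw [hAK, Set.biInter_eq_iInter]
        exact Set.mem_iInter.2 fun t => (hw t).1
      exact (hw ⟨0, Set.mem_Ici.2 le_rfl⟩).2 (hAU hwA)
    obtain ⟨t₀, ht₀, hKt₀U⟩ := hexU
    set t₁ : ℝ := max t₀ T with ht₁def
    have ht₁pos : 0 < t₁ := lt_of_lt_of_le hT (le_max_right _ _)
    set ε' : ℝ := min ε (d / 2) with hε'def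
    have hε'pos : 0 < ε' := lt_min hε (by linarith)
    obtain ⟨n, zs, ts, hn, hz0, hzn, hstep⟩ := hx ε' hε'pos t₁ ht₁pos
    -- all chain points are in P
    have hallP : ∀ i, i ≤ n → zs i ∈ P := by
      intro i
      induction i with
      | zero => intro _; rw [hz0]; exact hxP
      | succ k ih =>
        intro hk
        have hkP : zs k ∈ P := ih (by omega)
        have hs := hstep k (by omega)
        have htk : T ≤ ts k := le_trans (le_max_right t₀ T) hs.1
        exact hP0P (hextP (zs k) hkP (ts k) htk (zs (k + 1))
          (lt_of_lt_of_le hs.2 (min_le_left _ _)))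
    -- endpoint: the final jump lands near A
    obtain ⟨m, rfl⟩ : ∃ m, n = m + 1 := ⟨n - 1, (Nat.succ_pred_eq_of_pos hn).symm⟩
    have hmP : zs m ∈ P := hallP m (by omega)
    have hs := hstep m (by omega)
    have hjump : φ (zs m) (ts m) ∈ K (ts m) := ⟨zs m, subset_closure hmP, rfl⟩
    have hts : t₀ ≤ ts m := le_trans (le_max_left t₀ T) hs.1
    have hU' : φ (zs m) (ts m) ∈ U := hKt₀U (hKmono t₀ (ts m) ht₀ hts hjump)
    have hdist : dist x (φ (zs m) (ts m)) < d / 2 := by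
      have := hs.2
      rw [hzn] at this
      rw [dist_comm]
      exact lt_of_lt_of_le this (min_le_right _ _)
    have : Metric.infDist x A < d := by
      calc Metric.infDist x A
          ≤ Metric.infDist (φ (zs m) (ts m)) A + dist x (φ (zs m) (ts m)) :=
            Metric.infDist_le_infDist_add_dist
        _ < d / 2 + d / 2 := add_lt_add hU' hdist
        _ = d := by ring
    exact absurd this (by rw [← hddef]; exact lt_irrefl d)
  -- conclude: y ∈ A ⊆ K T, and trapping gives y ∈ P0
  have hyA : y ∈ A := h A hAattr hxA
  have hyK : y ∈ K T := hKsub T (le_of_lt hT) hyA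
  obtain ⟨u, hu, huy⟩ := hyK
  have hyP0 : φ u T ∈ P0 := htrap T le_rfl u hu
  have huy' : φ u T = y := huy
  rw [huy'] at hyP0
  exact hyP0
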